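/- Suppose $d \geq 2$ and there exists a coloring $c : \prod_{i<d} X_i \to \omega$ such that every somewhere-DDF subset of $\prod_{i<d} X_i$ receives infinitely many colors (i.e., the DDF collection on $\vec X = \langle X_0,\ldots,X_{d-1}\rangle$ is not weakly $\omega$-partition subregular). Then for any further perfect Polish space $X_d$, there exists a 2-coloring of $\prod_{i \leq d} X_i$ with no monochromatic somewhere-DDF subset. -/

import Mathlib

/-- `IsDDF d X t U Z`: `Z ⊆ ∏_{i<d} U i` is a dense-by-dense-filter (DDF) set,
defined by recursion on `d`. For `d = 0` it means `Z` is nonempty; for `d + 1` it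
means that `Z ⊆ ∏ U i`, the projection of `Z` to the first `d` coordinates is DDF,
and the fibers of `Z` over points of this projection generate a filter of subsets
of `X (last d)` that are dense in `U (last d)` (i.e. every finite intersection of
fibers is dense in `U (last d)`). -/
def IsDDF : (d : ℕ) → (X : Fin d → Type) → (t : ∀ i, TopologicalSpace (X i)) →
    (U : ∀ i, Set (X i)) → (Z : Set (∀ i, X i)) → Prop
  | 0, _, _, _, Z => Z.Nonempty
  | (d + 1), X, t, U, Z =>
      Z ⊆ {f | ∀ i, f i ∈ U i} ∧
      IsDDF d (fun i => X i.castSucc) (fun i => t i.castSucc)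
        (fun i => U i.castSucc) (Fin.init '' Z) ∧
      ∀ F : Finset (∀ i : Fin d, X i.castSucc), ↑F ⊆ Fin.init '' Z →
        U (Fin.last d) ⊆
          @closure _ (t (Fin.last d)) {y | ∀ x ∈ F, Fin.snoc x y ∈ Z}

/-- `Z` is somewhere-DDF: for some nonempty open sets `U i ⊆ X i`, `Z` is a DDF
subset of `∏ U i`. -/
def SomewhereDDF (d : ℕ) (X : Fin d → Type) (t : ∀ i, TopologicalSpace (X i))
    (Z : Set (∀ i, X i)) : Prop :=
  ∃ U : ∀ i, Set (X i), (∀ i, @IsOpen _ (t i) (U i)) ∧ (∀ i, (U i).Nonempty) ∧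
    IsDDF d X t U Z

open Set Metric

lemma ddf_avoid {X : Type*} [TopologicalSpace X] [T1Space X]
    (hperf : Preperfect (Set.univ : Set X)) {V : Set X} (hV : IsOpen V)
    (hVne : V.Nonempty) (A : Finset X) : (V \ ↑A).Nonempty := by
  classical
  induction A using Finset.induction_on with
  | empty => simpa using hVne
  | @insert a A ha IH =>
    have hopen : IsOpen (V \ ↑A) := hV.sdiff (A.finite_toSet.isClosed)
    by_cases hmem : a ∈ V \ ↑A
    · obtain ⟨y, hy, hya⟩ := (preperfect_iff_nhds.mp hperf) a trivial (V \ ↑A)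
        (hopen.mem_nhds hmem)
      refine ⟨y, hy.1.1, ?_⟩
      simp only [Finset.coe_insert, Set.mem_insert_iff]
      push_neg
      exact ⟨hya, hy.1.2⟩
    · obtain ⟨x, hx⟩ := IH
      refine ⟨x, hx.1, ?_⟩
      simp only [Finset.coe_insert, Set.mem_insert_iff]
      push_neg
      exact ⟨fun hxa => hmem (hxa ▸ hx), hx.2⟩

lemma ddf_exists_S (Xd : Type*) [TopologicalSpace Xd] [PolishSpace Xd]
    (hperf : Preperfect (Set.univ : Set Xd)) (hne : Nonempty Xd) :
    ∃ S : ℕ → Set Xd, ∃ B : ℕ → Set Xd, (∀ n, IsOpen (S n)) ∧ (∀ k, (B k).Nonempty) ∧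
      (∀ U : Set Xd, IsOpen U → U.Nonempty → ∃ k, B k ⊆ U) ∧
      ∀ n k, k ≤ n → (B k ∩ S n).Nonempty ∧ (B k ∩ interior (S n)ᶜ).Nonempty := by
  classical
  letI := TopologicalSpace.upgradeIsCompletelyMetrizable Xd
  obtain ⟨b, hbc, hbne, hbasis⟩ := TopologicalSpace.exists_countable_basis Xd
  have hbnonempty : b.Nonempty := by
    obtain ⟨x⟩ := hne
    obtain ⟨v, hvb, -, -⟩ := hbasis.exists_subset_of_mem_open (Set.mem_univ x) isOpen_univ
    exact ⟨v, hvb⟩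
  obtain ⟨B, hB⟩ := hbc.exists_eq_range hbnonempty
  have hBopen : ∀ k, IsOpen (B k) := fun k => hbasis.isOpen (hB ▸ Set.mem_range_self k)
  have hBne : ∀ k, (B k).Nonempty := fun k => by
    rcases Set.eq_empty_or_nonempty (B k) with h | h
    · exact absurd (h ▸ (hB ▸ Set.mem_range_self k)) hbne
    · exact h
  -- choose points
  have key : ∀ n : ℕ, ∃ S : Set Xd, IsOpen S ∧ ∀ k ≤ n,
      (B k ∩ S).Nonempty ∧ (B k ∩ interior Sᶜ).Nonempty := by
    intro n
    choose a ha using fun k : Fin (n + 1) => hBne k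
    choose bb hbb using fun k : Fin (n + 1) =>
      ddf_avoid hperf (hBopen k) (hBne k) (Finset.univ.image a)
    set D : ℝ := Finset.univ.inf' (by simp) fun kj : Fin (n + 1) × Fin (n + 1) =>
      dist (a kj.1) (bb kj.2)
    have hD : 0 < D := by
      rw [Finset.lt_inf'_iff]
      rintro ⟨k, j⟩ -
      have : a k ≠ bb j := by
        intro hEq
        exact (hbb j).2 (hEq ▸ Finset.mem_image_of_mem a (Finset.mem_univ k))
      exact dist_pos.mpr this
    have hDle : ∀ k j, D ≤ dist (a k) (bb j) := fun k j =>
      Finset.inf'_le _ (Finset.mem_univ (k, j))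
    set ε : ℝ := D / 3
    have hε : 0 < ε := by positivity
    refine ⟨⋃ k : Fin (n + 1), ball (a k) ε, isOpen_iUnion fun k => isOpen_ball, ?_⟩
    intro k hk
    have hklt : k < n + 1 := Nat.lt_succ_of_le hk
    constructor
    · exact ⟨a ⟨k, hklt⟩, (ha ⟨k, hklt⟩), Set.mem_iUnion.mpr ⟨⟨k, hklt⟩, mem_ball_self hε⟩⟩
    · refine ⟨bb ⟨k, hklt⟩, (hbb ⟨k, hklt⟩).1, ?_⟩
      rw [interior_compl]
      have hsub : closure (⋃ k : Fin (n + 1), ball (a k) ε) ⊆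
          ⋃ k : Fin (n + 1), closedBall (a k) ε := by
        apply closure_minimal
        · exact Set.iUnion_mono fun k => ball_subset_closedBall
        · exact isClosed_iUnion_of_finite fun k => isClosed_closedBall
      intro hmem
      obtain ⟨j, hj⟩ := Set.mem_iUnion.mp (hsub hmem)
      have h1 : dist (bb ⟨k, hklt⟩) (a j) ≤ ε := hj
      have h2 : D ≤ dist (a j) (bb ⟨k, hklt⟩) := hDle j ⟨k, hklt⟩
      rw [dist_comm] at h1
      have hεdef : ε = D / 3 := rfl
      have : D ≤ ε := h2.trans h1
      rw [hεdef] at this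
      linarith
  choose S hSopen hS using key
  refine ⟨S, B, hSopen, hBne, ?_, fun n k hk => hS n k hk⟩
  intro U hU hUne
  obtain ⟨x, hx⟩ := hUne
  obtain ⟨v, hvb, hxv, hvU⟩ := hbasis.exists_subset_of_mem_open hx hU
  rw [hB] at hvb
  obtain ⟨k, hk⟩ := hvb
  exact ⟨k, hk ▸ hvU⟩

/-- If the DDF collection on `⟨X 0, …, X (d-1)⟩` is not weakly ω-partition subregular
(there is a countable coloring giving every somewhere-DDF set infinitely many colors),
then for any further perfect Polish space `X d` there is a 2-coloring of
`∏_{i ≤ d} X i` with no monochromatic somewhere-DDF subset. -/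
theorem stmt10 (d : ℕ) (hd : 2 ≤ d)
    (X : Fin (d + 1) → Type) [t : ∀ i, TopologicalSpace (X i)]
    (hPolish : ∀ i, PolishSpace (X i)) (hperf : ∀ i, Perfect (Set.univ : Set (X i)))
    (hne : ∀ i, Nonempty (X i))
    (h : ∃ c : (∀ i : Fin d, X i.castSucc) → ℕ,
      ∀ Y : Set (∀ i : Fin d, X i.castSucc),
        SomewhereDDF d (fun i => X i.castSucc) (fun i => inferInstance) Y →
        (c '' Y).Infinite) :
    ∃ γ : (∀ i, X i) → Fin 2,
      ∀ (j : Fin 2) (Y : Set (∀ i, X i)),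
        SomewhereDDF (d + 1) X (fun i => inferInstance) Y →
        ¬ Y ⊆ γ ⁻¹' {j} := by
  classical
  obtain ⟨c, hc⟩ := h
  haveI := hPolish (Fin.last d)
  obtain ⟨S, B, hSopen, hBne, hBbasis, hSn⟩ :=
    ddf_exists_S (X (Fin.last d)) (hperf (Fin.last d)).acc (hne (Fin.last d))
  refine ⟨fun f => if f (Fin.last d) ∈ S (c (Fin.init f)) then 1 else 0, ?_⟩
  rintro j Y ⟨U, hUopen, hUne, hDDF⟩ hmono
  obtain ⟨hZsub, hproj, hfib⟩ := hDDF
  have hsome : SomewhereDDF d (fun i => X i.castSucc) (fun i => inferInstance)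
      (Fin.init '' Y) :=
    ⟨fun i => U i.castSucc, fun i => hUopen i.castSucc, fun i => hUne i.castSucc, hproj⟩
  have hcinf := hc _ hsome
  obtain ⟨k, hkU⟩ := hBbasis (U (Fin.last d)) (hUopen (Fin.last d)) (hUne (Fin.last d))
  obtain ⟨n, hnmem, hkn⟩ := hcinf.exists_gt k
  obtain ⟨x, hxY, hcx⟩ := hnmem
  obtain ⟨hne1, hne2⟩ := hSn n k hkn.le
  have hfibx := hfib {x} (by simpa using hxY)
  -- find y1 in the fiber with y1 ∈ S n
  obtain ⟨z1, hz1B, hz1S⟩ := hne1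
  obtain ⟨y1, hy1o, hy1f⟩ := (_root_.mem_closure_iff.mp (hfibx (hkU hz1B)))
    (U (Fin.last d) ∩ S n) ((hUopen (Fin.last d)).inter (hSopen n)) ⟨hkU hz1B, hz1S⟩
  -- find y0 in the fiber with y0 ∉ S n
  obtain ⟨z0, hz0B, hz0S⟩ := hne2
  obtain ⟨y0, hy0o, hy0f⟩ := (_root_.mem_closure_iff.mp (hfibx (hkU hz0B)))
    (U (Fin.last d) ∩ interior (S n)ᶜ)
    ((hUopen (Fin.last d)).inter isOpen_interior) ⟨hkU hz0B, hz0S⟩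
  have hy1Y : Fin.snoc x y1 ∈ Y := hy1f x (Finset.mem_singleton_self x)
  have hy0Y : Fin.snoc x y0 ∈ Y := hy0f x (Finset.mem_singleton_self x)
  have e1 := hmono hy1Y
  have e0 := hmono hy0Y
  simp only [Set.mem_preimage, Set.mem_singleton_iff] at e1 e0
  rw [Fin.snoc_last, Fin.init_snoc, hcx] at e1 e0
  rw [if_pos hy1o.2] at e1
  rw [if_neg (fun hmem => (interior_subset hy0o.2) hmem)] at e0
  rw [← e1] at e0
  exact absurd e0 (by decide)
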